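/- arXiv:1701.01388 — 2 statements merged into one kernel-verified Lean document; each statement's English description precedes it below -/
import Mathlib

section
/- Let R ∈ ℤ^m and S ∈ ℤ^n be nonnegative integer vectors with equal component sums, every component of R at most n and every component of S at most m. There exists an m×n (0,1)-matrix A with row sum vector R and column sum vector S invariant under both r_0 and r_∞ if and only if all of the following hold: (a) S is palindromic and R is palindromic; (b) if n is even then every component of R is even, if n is odd then s_⌈n/2⌉ ≥ o(R), if m is even then every component of S is even, and if m is odd then r_⌈m/2⌉ ≥ o(S); (c) if n is odd then o(R) = s_⌈n/2⌉ and if m is odd then o(S) = r_⌈m/2⌉; and (d) S̆ ⪯ R̆*, where R̆ = (⌊r_1/2⌋, ⌊r_2/2⌋, …, ⌊r_⌊m/2⌋/2⌋) and S̆ = (⌊s_1/2⌋, ⌊s_2/2⌋, …, ⌊s_⌊n/2⌋/2⌋). -/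
/-- The multiset of components of a vector. -/
def vecMS {n : ℕ} (v : Fin n → ℕ) : Multiset ℕ := Multiset.map v Finset.univ.val

/-- The sum of the `k` largest elements of a multiset of natural numbers. -/
def topSum (M : Multiset ℕ) (k : ℕ) : ℕ := ((M.sort (· ≤ ·)).reverse.take k).sum

/-- `MajorizedBy S R` means `S ⪯ R`: the component sums agree and every
partial sum of the weakly decreasing rearrangement of `R` dominates the
corresponding partial sum for `S`. -/
def MajorizedBy (S R : Multiset ℕ) : Prop := S.sum = R.sum ∧ ∀ k, topSum S k ≤ topSum R k

/-- The conjugate `R*` of (the weakly decreasing rearrangement of) `R`,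
viewed as an integer partition. -/
def conjMS (M : Multiset ℕ) : Multiset ℕ :=
  (Multiset.range M.sum).map fun j => (M.filter (fun x => j + 1 ≤ x)).card

namespace TopAux

/-- helper: one-step head bound -/
lemma take_sum_le_cons (a : ℕ) (l : List ℕ) (ha : ∀ x ∈ l, x ≤ a) (k : ℕ) :
    (l.take (k+1)).sum ≤ a + (l.take k).sum := by
  cases l with
  | nil => simp
  | cons b t =>
    cases k with
    | zero => simpa using ha b (by simp)
    | succ k =>
      simp only [List.take_succ_cons, List.sum_cons]
      have : (t.take (k+1)).sum ≤ a + (t.take k).sum :=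
        take_sum_le_cons a t (fun x hx => ha x (by simp [hx])) k
      omega

lemma take_sum_mono_of_sublist {l₂ : List ℕ} (h₂ : l₂.Pairwise (· ≥ ·)) {l₁ : List ℕ}
    (h : l₁.Sublist l₂) : ∀ k, (l₁.take k).sum ≤ (l₂.take k).sum := by
  induction h with
  | slnil => simp
  | @cons l₁ l₂ a h ih =>
    intro k
    have hs : l₂.Pairwise (· ≥ ·) := h₂.of_cons
    have ha : ∀ x ∈ l₂, x ≤ a := fun x hx => List.rel_of_pairwise_cons h₂ hx
    cases k with
    | zero => simp
    | succ k =>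
      calc (l₁.take (k+1)).sum ≤ (l₂.take (k+1)).sum := ih hs (k+1)
        _ ≤ a + (l₂.take k).sum := take_sum_le_cons a l₂ ha k
        _ = ((a :: l₂).take (k+1)).sum := by simp
  | @cons_cons l₁ l₂ a h ih =>
    intro k
    cases k with
    | zero => simp
    | succ k =>
      simp only [List.take_succ_cons, List.sum_cons]
      exact Nat.add_le_add_left (ih h₂.of_cons k) a

lemma sortedDesc (M : Multiset ℕ) : ((M.sort (· ≤ ·)).reverse).Pairwise (· ≥ ·) := by
  have := Multiset.pairwise_sort (s := M) (r := (· ≤ ·))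
  rw [List.pairwise_reverse]
  exact this

lemma coe_sort_reverse (M : Multiset ℕ) : (((M.sort (· ≤ ·)).reverse : List ℕ) : Multiset ℕ) = M := by
  rw [Multiset.coe_reverse, Multiset.sort_eq]

/-- Key upper bound: any submultiset with at most `k` elements has sum at most `topSum M k`. -/
lemma sum_le_topSum {N M : Multiset ℕ} (h : N ≤ M) {k : ℕ} (hk : N.card ≤ k) :
    N.sum ≤ topSum M k := by
  set l₂ := (M.sort (· ≤ ·)).reverse with hl₂
  have hcoe : (l₂ : Multiset ℕ) = M := coe_sort_reverse M
  have h' : (N.toList : Multiset ℕ) ≤ (l₂ : Multiset ℕ) := by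
    rw [Multiset.coe_toList, hcoe]; exact h
  obtain ⟨l₁, hperm, hsub⟩ := Multiset.coe_le.mp h'
  have hsum : l₁.sum = N.sum := by
    rw [hperm.sum_eq, Multiset.sum_toList]
  have hlen : l₁.length ≤ k := by
    have := hperm.length_eq
    rw [Multiset.length_toList] at this
    omega
  calc N.sum = (l₁.take k).sum := by rw [List.take_of_length_le hlen, hsum]
    _ ≤ (l₂.take k).sum := take_sum_mono_of_sublist (sortedDesc M) hsub k
    _ = topSum M k := rfl

lemma exists_witness (M : Multiset ℕ) (k : ℕ) :
    ∃ N : Multiset ℕ, N ≤ M ∧ N.card ≤ k ∧ N.sum = topSum M k := by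
  refine ⟨(((M.sort (· ≤ ·)).reverse.take k : List ℕ) : Multiset ℕ), ?_, ?_, ?_⟩
  · calc (((M.sort (· ≤ ·)).reverse.take k : List ℕ) : Multiset ℕ)
        ≤ (((M.sort (· ≤ ·)).reverse : List ℕ) : Multiset ℕ) :=
          Multiset.coe_le.mpr (List.take_sublist _ _).subperm
      _ = M := coe_sort_reverse M
  · simpa using Nat.min_le_left k _
  · simp [topSum, Multiset.sum_coe]

lemma topSum_mono_left {M M' : Multiset ℕ} (h : M ≤ M') (k : ℕ) :
    topSum M k ≤ topSum M' k := by
  obtain ⟨N, hN, hc, hs⟩ := exists_witness M k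
  rw [← hs]; exact sum_le_topSum (hN.trans h) hc

lemma topSum_cons_succ (a : ℕ) (M : Multiset ℕ) (k : ℕ) :
    topSum M k + a ≤ topSum (a ::ₘ M) (k+1) := by
  obtain ⟨N, hN, hc, hs⟩ := exists_witness M k
  rw [← hs]
  have : (a ::ₘ N).sum ≤ topSum (a ::ₘ M) (k+1) :=
    sum_le_topSum (Multiset.cons_le_cons a hN) (by simpa using hc)
  simpa [Multiset.sum_cons, Nat.add_comm] using this

lemma topSum_eq_sum_of_card_le {M : Multiset ℕ} {k : ℕ} (h : M.card ≤ k) :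
    topSum M k = M.sum := by
  have hlen : ((M.sort (· ≤ ·)).reverse).length ≤ k := by
    simpa using h
  unfold topSum
  rw [List.take_of_length_le hlen]
  have := coe_sort_reverse M
  rw [← Multiset.sum_coe, this]

lemma topSum_le_sum (M : Multiset ℕ) (k : ℕ) : topSum M k ≤ M.sum := by
  obtain ⟨N, hN, _, hs⟩ := exists_witness M k
  rw [← hs]
  obtain ⟨t, rfl⟩ := Multiset.le_iff_exists_add.mp hN
  simp

end TopAux
namespace TopAux

lemma sum_le_take {l : List ℕ} (hl : l.Pairwise (· ≥ ·)) {N : Multiset ℕ} (h : N ≤ ↑l)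
    {k : ℕ} (hk : N.card ≤ k) : N.sum ≤ (l.take k).sum := by
  have h' : (N.toList : Multiset ℕ) ≤ (l : Multiset ℕ) := by rw [Multiset.coe_toList]; exact h
  obtain ⟨l₁, hperm, hsub⟩ := Multiset.coe_le.mp h'
  have hsum : l₁.sum = N.sum := by rw [hperm.sum_eq, Multiset.sum_toList]
  have hlen : l₁.length ≤ k := by
    have := hperm.length_eq; rw [Multiset.length_toList] at this; omega
  calc N.sum = (l₁.take k).sum := by rw [List.take_of_length_le hlen, hsum]
    _ ≤ (l.take k).sum := take_sum_mono_of_sublist hl hsub k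

lemma topSum_eq_take {l : List ℕ} (hl : l.Pairwise (· ≥ ·)) (k : ℕ) :
    topSum (↑l) k = (l.take k).sum := by
  apply le_antisymm
  · obtain ⟨N, hN, hc, hs⟩ := exists_witness (↑l) k
    rw [← hs]; exact sum_le_take hl hN hc
  · have : ((l.take k : List ℕ) : Multiset ℕ).sum ≤ topSum (↑l) k :=
      sum_le_topSum (Multiset.coe_le.mpr (List.take_sublist _ _).subperm)
        (by simpa using Nat.min_le_left k _)
    simpa [Multiset.sum_coe] using this

lemma card_filter_eq_sum_map (p : ℕ → Prop) [DecidablePred p] (M : Multiset ℕ) :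
    Multiset.card (M.filter p) = (M.map (fun x => if p x then 1 else 0)).sum := by
  induction M using Multiset.induction with
  | empty => simp
  | cons a M ih =>
    by_cases h : p a <;> simp [Multiset.filter_cons, h, ih] <;> omega

lemma sum_map_swap (M : Multiset ℕ) (t : ℕ) (h : ℕ → ℕ → ℕ) :
    ∑ j ∈ Finset.range t, (M.map (h j)).sum = (M.map (fun x => ∑ j ∈ Finset.range t, h j x)).sum := by
  induction M using Multiset.induction with
  | empty => simp
  | cons a M ih => simp [Finset.sum_add_distrib, ih]

lemma sum_indicator_min (x t : ℕ) :
    ∑ j ∈ Finset.range t, (if j + 1 ≤ x then 1 else 0) = min x t := by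
  induction t with
  | zero => simp
  | succ t ih =>
    rw [Finset.sum_range_succ, ih]
    split <;> omega

lemma conj_topSum (M : Multiset ℕ) (k : ℕ) :
    topSum (conjMS M) k = (M.map (fun x => min x k)).sum := by
  set N := M.sum with hN
  set g : ℕ → ℕ := fun j => Multiset.card (M.filter (fun x => j + 1 ≤ x)) with hg
  have hconj : conjMS M = ((List.range N).map g : List ℕ) := by
    show (Multiset.range N).map g = _
    rw [show Multiset.range N = ((List.range N : List ℕ) : Multiset ℕ) from rfl,
      Multiset.map_coe]
  have hsorted : ((List.range N).map g).Pairwise (· ≥ ·) := by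
    rw [List.pairwise_map]
    apply List.Pairwise.imp ?_ (List.pairwise_lt_range (n := N))
    intro a b hab
    exact Multiset.card_le_card (Multiset.monotone_filter_right M (fun x hx => by omega))
  rw [hconj, topSum_eq_take hsorted, ← List.map_take, List.take_range]
  have : ((List.range (k ⊓ N)).map g).sum = ∑ j ∈ Finset.range (k ⊓ N), g j := by
    rfl
  rw [this]
  simp only [hg, card_filter_eq_sum_map]
  rw [sum_map_swap]
  apply congrArg
  apply Multiset.map_congr rfl
  intro x hx
  have hxN : x ≤ N := Multiset.single_le_sum (fun y _ => Nat.zero_le y) x hx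
  rw [sum_indicator_min]
  omega

lemma conj_card (M : Multiset ℕ) : Multiset.card (conjMS M) = M.sum := by
  simp [conjMS]

lemma conj_sum (M : Multiset ℕ) : (conjMS M).sum = M.sum := by
  have h1 : (conjMS M).sum = topSum (conjMS M) (M.sum) := by
    rw [topSum_eq_sum_of_card_le (by rw [conj_card])]
  rw [h1, conj_topSum]
  have : M.map (fun x => min x M.sum) = M.map id := by
    apply Multiset.map_congr rfl
    intro x hx
    have : x ≤ M.sum := Multiset.single_le_sum (fun y _ => Nat.zero_le y) x hx
    simp [min_eq_left this]
  rw [this, Multiset.map_id]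

end TopAux
namespace TopAux

lemma vecMS_sum {p : ℕ} (v : Fin p → ℕ) : (vecMS v).sum = ∑ i, v i := rfl

lemma vecMS_card {p : ℕ} (v : Fin p → ℕ) : Multiset.card (vecMS v) = p := by
  simp [vecMS]

lemma mem_vecMS {p : ℕ} (v : Fin p → ℕ) (i : Fin p) : v i ∈ vecMS v :=
  Multiset.mem_map.mpr ⟨i, Finset.mem_univ_val i, rfl⟩

lemma vecMS_succAbove {q : ℕ} (s : Fin (q+1) → ℕ) (j₀ : Fin (q+1)) :
    vecMS s = s j₀ ::ₘ vecMS (fun j => s (j₀.succAbove j)) := by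
  unfold vecMS
  rw [Fin.univ_succAbove q j₀]
  rw [Finset.cons_val, Multiset.map_cons, Finset.map_val, Multiset.map_map]
  rfl

lemma exists_topSet {p : ℕ} (r : Fin p → ℕ) (c : ℕ) (hc : c ≤ p) :
    ∃ T : Finset (Fin p), T.card = c ∧ ∀ i ∈ T, ∀ i' ∉ T, r i' ≤ r i := by
  induction c with
  | zero => exact ⟨∅, by simp, by simp⟩
  | succ c ih =>
    obtain ⟨T, hcard, htop⟩ := ih (by omega)
    have hne : Tᶜ.Nonempty := by
      rw [← Finset.card_pos, Finset.card_compl, Fintype.card_fin, hcard]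
      omega
    obtain ⟨i₀, hi₀, hmax⟩ := Finset.exists_max_image Tᶜ r hne
    have hi₀T : i₀ ∉ T := Finset.mem_compl.mp hi₀
    refine ⟨insert i₀ T, by rw [Finset.card_insert_of_notMem hi₀T, hcard], ?_⟩
    intro i hi i' hi'
    have hi'T : i' ∉ T := fun h => hi' (Finset.mem_insert_of_mem h)
    rcases Finset.mem_insert.mp hi with rfl | hiT
    · exact hmax i' (Finset.mem_compl.mpr hi'T)
    · exact htop i hiT i' hi'T

lemma exists_map_preimage {α β : Type*} [DecidableEq α] [DecidableEq β] (f : α → β)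
    (u : Multiset α) (N : Multiset β) (h : N ≤ u.map f) : ∃ u', u' ≤ u ∧ u'.map f = N := by
  induction N using Multiset.induction generalizing u with
  | empty => exact ⟨0, by simp, by simp⟩
  | cons b N ih =>
    have hb : b ∈ u.map f := Multiset.mem_of_le h (Multiset.mem_cons_self b N)
    obtain ⟨a, ha, rfl⟩ := Multiset.mem_map.mp hb
    have hN : N ≤ (u.erase a).map f := by
      rw [Multiset.map_erase_of_mem f u ha]
      have := Multiset.erase_le_erase (f a) h
      simpa using this
    obtain ⟨u', hu', hmap⟩ := ih (u.erase a) hN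
    exact ⟨a ::ₘ u', (Multiset.cons_le_cons a hu').trans
      (by rw [Multiset.cons_erase ha]), by rw [Multiset.map_cons, hmap]⟩

end TopAux
namespace TopAux

lemma GR_forward {p q : ℕ} (r : Fin p → ℕ) (s : Fin q → ℕ) (B : Matrix (Fin p) (Fin q) ℕ)
    (h01 : ∀ i j, B i j = 0 ∨ B i j = 1) (hrow : ∀ i, ∑ j, B i j = r i)
    (hcol : ∀ j, ∑ i, B i j = s j) (k : ℕ) :
    topSum (vecMS s) k ≤ ∑ i, min (r i) k := by
  obtain ⟨N, hN, hc, hs⟩ := exists_witness (vecMS s) k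
  obtain ⟨u', hu', hmap⟩ := exists_map_preimage s Finset.univ.val N hN
  have hnodup : u'.Nodup := Multiset.nodup_of_le hu' Finset.univ.nodup
  set K : Finset (Fin q) := ⟨u', hnodup⟩ with hK
  have hKcard : K.card ≤ k := by
    have : Multiset.card u' = Multiset.card N := by rw [← hmap, Multiset.card_map]
    simpa [Finset.card, hK, this] using hc
  have hNsum : N.sum = ∑ j ∈ K, s j := by
    rw [← hmap]; rfl
  rw [← hs, hNsum]
  have : ∑ j ∈ K, s j = ∑ i, ∑ j ∈ K, B i j := by
    refine Eq.trans ?_ (Finset.sum_comm (f := fun i j => B i j)).symm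
    exact Finset.sum_congr rfl fun j _ => (hcol j).symm
  rw [this]
  apply Finset.sum_le_sum
  intro i _
  have h1 : ∑ j ∈ K, B i j ≤ r i := by
    rw [← hrow i]
    exact Finset.sum_le_sum_of_subset (Finset.subset_univ K)
  have h2 : ∑ j ∈ K, B i j ≤ k := by
    calc ∑ j ∈ K, B i j ≤ ∑ _j ∈ K, 1 :=
          Finset.sum_le_sum fun j _ => by rcases h01 i j with h | h <;> omega
      _ = K.card := by simp
      _ ≤ k := hKcard
  omega

theorem GR_exists : ∀ (q p : ℕ) (r : Fin p → ℕ) (s : Fin q → ℕ),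
    (∀ i, r i ≤ q) → (∀ j, s j ≤ p) → (∑ i, r i = ∑ j, s j) →
    (∀ k, topSum (vecMS s) k ≤ ∑ i, min (r i) k) →
    ∃ B : Matrix (Fin p) (Fin q) ℕ, (∀ i j, B i j = 0 ∨ B i j = 1) ∧
      (∀ i, ∑ j, B i j = r i) ∧ (∀ j, ∑ i, B i j = s j) := by
  intro q
  induction q with
  | zero =>
    intro p r s _ _ hsum _
    have hr0 : ∀ i, r i = 0 := by
      intro i
      have h0 : ∑ i, r i = 0 := by rw [hsum]; simp
      exact (Finset.sum_eq_zero_iff.mp h0) i (Finset.mem_univ i)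
    exact ⟨fun _ _ => 0, fun i j => Or.inl rfl,
      fun i => by simpa using (hr0 i).symm, fun j => j.elim0⟩
  | succ q ih =>
    intro p r s hr hs hsum hmaj
    obtain ⟨j₀, -, hmax⟩ := Finset.exists_max_image Finset.univ s
      ⟨⟨0, Nat.succ_pos q⟩, Finset.mem_univ _⟩
    set s' : Fin q → ℕ := fun j => s (j₀.succAbove j) with hs'def
    have hdecomp : vecMS s = s j₀ ::ₘ vecMS s' := vecMS_succAbove s j₀
    have hsumdecomp : ∑ j, s j = s j₀ + ∑ j, s' j := Fin.sum_univ_succAbove s j₀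
    have hnz : s j₀ ≤ (Finset.univ.filter fun i => 1 ≤ r i).card := by
      have h1 : s j₀ ≤ topSum (vecMS s) 1 := by
        have h2 : ({s j₀} : Multiset ℕ).sum ≤ topSum (vecMS s) 1 :=
          sum_le_topSum (Multiset.singleton_le.mpr (mem_vecMS s j₀)) (by simp)
        simpa using h2
      have h2 : ∑ i, min (r i) 1 = (Finset.univ.filter fun i => 1 ≤ r i).card := by
        rw [Finset.card_filter]
        exact Finset.sum_congr rfl fun i _ => by split <;> omega
      have h3 := hmaj 1
      omega
    obtain ⟨T, hTcard, hTtop⟩ := exists_topSet r (s j₀) (hs j₀)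
    have hTpos : ∀ i ∈ T, 1 ≤ r i := by
      intro i hi
      by_contra hri
      have hri0 : r i = 0 := by omega
      have hsub : (Finset.univ.filter fun i => 1 ≤ r i) ⊆ T.erase i := by
        intro i' hi'
        have h1 : 1 ≤ r i' := (Finset.mem_filter.mp hi').2
        refine Finset.mem_erase.mpr ⟨fun h => by rw [h] at h1; omega, ?_⟩
        by_contra hi'T
        have := hTtop i hi i' hi'T
        omega
      have hcle := Finset.card_le_card hsub
      rw [Finset.card_erase_of_mem hi, hTcard] at hcle
      have hT1 : 1 ≤ T.card := Finset.card_pos.mpr ⟨i, hi⟩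
      rw [hTcard] at hT1
      omega
    have hfull : ∀ i, r i = q + 1 → i ∈ T := by
      intro i hri
      by_contra hiT
      have hfc : (Finset.univ.filter fun i => r i = q + 1).card ≤ s j₀ := by
        have h1 : ∑ j, s j ≤ s j₀ + topSum (vecMS s) q := by
          have h2 : (vecMS s').sum ≤ topSum (vecMS s) q := by
            apply sum_le_topSum
            · rw [hdecomp]; exact Multiset.le_cons_self _ _
            · rw [vecMS_card]
          rw [vecMS_sum] at h2
          omega
        have h2 : ∑ i, min (r i) q + (Finset.univ.filter fun i => r i = q + 1).card
            = ∑ i, r i := by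
          rw [Finset.card_filter, ← Finset.sum_add_distrib]
          exact Finset.sum_congr rfl fun i _ => by have := hr i; split <;> omega
        have h3 := hmaj q
        omega
      have hsub : insert i T ⊆ Finset.univ.filter fun i => r i = q + 1 := by
        intro i' hi'
        rcases Finset.mem_insert.mp hi' with rfl | hi'T
        · exact Finset.mem_filter.mpr ⟨Finset.mem_univ _, hri⟩
        · have h4 := hTtop i' hi'T i hiT
          have h5 := hr i'
          exact Finset.mem_filter.mpr ⟨Finset.mem_univ _, by omega⟩
      have hcle := Finset.card_le_card hsub
      rw [Finset.card_insert_of_notMem hiT, hTcard] at hcle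
      omega
    set r' : Fin p → ℕ := fun i => r i - (if i ∈ T then 1 else 0) with hr'def
    have hrr' : ∀ i, r i = r' i + (if i ∈ T then 1 else 0) := by
      intro i
      by_cases hi : i ∈ T
      · have := hTpos i hi; simp only [hr'def, hi, if_true]; omega
      · simp [hr'def, hi]
    have hsumT : ∑ i, (if i ∈ T then 1 else 0) = T.card := by
      simp [Finset.sum_ite_mem]
    have hr' : ∀ i, r' i ≤ q := by
      intro i
      by_cases hi : i ∈ T
      · have := hr i; simp only [hr'def, hi, if_true]; omega
      · have h6 : r i ≠ q + 1 := fun h => hi (hfull i h)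
        have := hr i; simp only [hr'def, hi, if_false]; omega
    have hsum' : ∑ i, r' i = ∑ j, s' j := by
      have h7 : ∑ i, r i = ∑ i, r' i + T.card := by
        rw [← hsumT, ← Finset.sum_add_distrib]
        exact Finset.sum_congr rfl fun i _ => hrr' i
      omega
    have hmaj' : ∀ k, topSum (vecMS s') k ≤ ∑ i, min (r' i) k := by
      intro k
      set c := (T.filter fun i => r i ≤ k).card with hcdef
      have hfe : Finset.univ.filter (fun i => i ∈ T ∧ r i ≤ k) = T.filter (fun i => r i ≤ k) := by
        ext i; simp [Finset.mem_filter]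
      have hcsum : c = ∑ i, (if i ∈ T ∧ r i ≤ k then 1 else 0) := by
        rw [hcdef, ← hfe, Finset.card_filter]
      have hE1 : ∑ i, min (r' i) k + c = ∑ i, min (r i) k := by
        rw [hcsum, ← Finset.sum_add_distrib]
        apply Finset.sum_congr rfl
        intro i _
        by_cases hi : i ∈ T
        · have h1 := hTpos i hi
          simp only [hr'def, hi, if_true, true_and]
          split <;> omega
        · simp only [hr'def, hi, if_false, false_and]
          omega
      by_cases hc0 : c = 0
      · have hm := topSum_mono_left
          (show vecMS s' ≤ vecMS s by rw [hdecomp]; exact Multiset.le_cons_self _ _) k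
        have := hmaj k
        omega
      · have hne : (T.filter fun i => r i ≤ k).Nonempty := Finset.card_pos.mp (by omega)
        obtain ⟨i₁, hi₁⟩ := hne
        have hi₁T : i₁ ∈ T := (Finset.mem_filter.mp hi₁).1
        have hi₁k : r i₁ ≤ k := (Finset.mem_filter.mp hi₁).2
        have hout : ∀ i', i' ∉ T → r i' ≤ k := fun i' h => (hTtop i₁ hi₁T i' h).trans hi₁k
        have hd : Finset.univ.filter (fun i => k + 1 ≤ r i) = T.filter (fun i => k + 1 ≤ r i) := by
          ext i
          simp only [Finset.mem_filter, Finset.mem_univ, true_and]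
          constructor
          · intro hk1
            refine ⟨?_, hk1⟩
            by_contra hiT
            have := hout i hiT
            omega
          · exact fun h => h.2
        have hneg : T.filter (fun i => ¬ r i ≤ k) = T.filter (fun i => k + 1 ≤ r i) :=
          Finset.filter_congr (fun i _ => by constructor <;> intro <;> omega)
        have hdc : (Finset.univ.filter fun i => k + 1 ≤ r i).card + c = s j₀ := by
          have hpm := Finset.card_filter_add_card_filter_not
            (s := T) (p := fun i => r i ≤ k)
          rw [hneg] at hpm
          rw [hd]
          omega
        have hE2 : ∑ i, min (r i) (k+1)
            = ∑ i, min (r i) k + (Finset.univ.filter fun i => k + 1 ≤ r i).card := by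
          rw [Finset.card_filter, ← Finset.sum_add_distrib]
          exact Finset.sum_congr rfl fun i _ => by split <;> omega
        have hchain : topSum (vecMS s') k + s j₀ ≤ topSum (vecMS s) (k+1) := by
          rw [hdecomp]; exact topSum_cons_succ _ _ k
        have := hmaj (k+1)
        omega
    obtain ⟨B', h01', hrow', hcol'⟩ := ih p r' s' hr' (fun j => hs _) hsum' hmaj'
    set tInd : Fin p → ℕ := fun i => if i ∈ T then 1 else 0 with htInd
    refine ⟨fun i j => Fin.insertNth (α := fun _ => ℕ) j₀ (tInd i) (B' i) j, ?_, ?_, ?_⟩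
    · intro i j
      simp only []
      by_cases hj : j = j₀
      · rw [hj, Fin.insertNth_apply_same]
        by_cases hi : i ∈ T <;> simp [htInd, hi]
      · obtain ⟨z, rfl⟩ := Fin.exists_succAbove_eq hj
        rw [Fin.insertNth_apply_succAbove]
        exact h01' i z
    · intro i
      simp only []
      rw [Fin.sum_univ_succAbove (fun j => Fin.insertNth (α := fun _ => ℕ) j₀ (tInd i) (B' i) j) j₀]
      simp only [Fin.insertNth_apply_same, Fin.insertNth_apply_succAbove]
      rw [hrow' i, hrr' i]
      simp only [htInd]
      omega
    · intro j
      simp only []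
      by_cases hj : j = j₀
      · have e : ∀ i : Fin p, Fin.insertNth (α := fun _ => ℕ) j₀ (tInd i) (B' i) j = tInd i := by
          intro i; rw [hj, Fin.insertNth_apply_same]
        calc ∑ i, Fin.insertNth (α := fun _ => ℕ) j₀ (tInd i) (B' i) j = ∑ i, tInd i :=
              Finset.sum_congr rfl fun i _ => e i
          _ = s j := by rw [htInd] at hsumT ⊢; rw [hsumT, hTcard, hj]
      · obtain ⟨z, rfl⟩ := Fin.exists_succAbove_eq hj
        have e : ∀ i : Fin p, Fin.insertNth (α := fun _ => ℕ) j₀ (tInd i) (B' i) (j₀.succAbove z) = B' i z :=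
          by intro i; rw [Fin.insertNth_apply_succAbove]
        calc ∑ i, Fin.insertNth (α := fun _ => ℕ) j₀ (tInd i) (B' i) (j₀.succAbove z) = ∑ i, B' i z :=
              Finset.sum_congr rfl fun i _ => e i
          _ = s (j₀.succAbove z) := hcol' z

end TopAux
namespace TopAux

lemma split_sum (g : ℕ → ℕ) (n : ℕ) :
    ∑ j ∈ Finset.range n, g j
      = (∑ j ∈ Finset.range (n/2), g j) + (∑ j ∈ Finset.range (n/2), g (n - 1 - j))
        + (n % 2) * g (n / 2) := by
  set q := n / 2 with hq
  have h1 : ∑ j ∈ Finset.Ico 0 (q + n % 2), g j + ∑ j ∈ Finset.Ico (q + n % 2) n, g j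
      = ∑ j ∈ Finset.Ico 0 n, g j :=
    Finset.sum_Ico_consecutive g (by omega) (by omega)
  have h2 : ∑ j ∈ Finset.Ico (q + n % 2) n, g j = ∑ j ∈ Finset.range q, g (n - 1 - j) := by
    apply Finset.sum_nbij' (fun a => n - 1 - a) (fun a => n - 1 - a)
    · intro a ha; rw [Finset.mem_Ico] at ha; rw [Finset.mem_range]; omega
    · intro a ha; rw [Finset.mem_range] at ha; rw [Finset.mem_Ico]; omega
    · intro a ha; rw [Finset.mem_Ico] at ha; omega
    · intro a ha; rw [Finset.mem_range] at ha; omega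
    · intro a ha; rw [Finset.mem_Ico] at ha; congr 1; omega
  have h3 : ∑ j ∈ Finset.Ico 0 (q + n % 2), g j
      = ∑ j ∈ Finset.range q, g j + (n % 2) * g q := by
    have : n % 2 = 0 ∨ n % 2 = 1 := by omega
    rcases this with h | h
    · rw [h, Nat.add_zero, ← Finset.range_eq_Ico]
      omega
    · rw [h, ← Finset.range_eq_Ico, Finset.sum_range_succ]
      omega
  have h0 : ∑ j ∈ Finset.range n, g j = ∑ j ∈ Finset.Ico 0 n, g j := by
    rw [Finset.range_eq_Ico]
  rw [h0, ← h1, h2, h3]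
  omega

lemma fin_mk_rev {n : ℕ} (a : ℕ) (h : a < n) :
    (⟨a, h⟩ : Fin n).rev = ⟨n - 1 - a, by omega⟩ := by
  apply Fin.ext
  rw [Fin.val_rev]
  show n - (a + 1) = n - 1 - a
  omega

lemma sum_fin_split {n : ℕ} (f : Fin n → ℕ) (hf : ∀ j, f j = f j.rev) :
    ∑ j, f j
      = 2 * (∑ j : Fin (n / 2), f ⟨j.val, lt_of_lt_of_le j.isLt (Nat.div_le_self n 2)⟩)
        + (n % 2) * (if h : n / 2 < n then f ⟨n / 2, h⟩ else 0) := by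
  set g : ℕ → ℕ := fun a => if h : a < n then f ⟨a, h⟩ else 0 with hg
  have h1 : ∑ j, f j = ∑ a ∈ Finset.range n, g a := by
    rw [← Fin.sum_univ_eq_sum_range]
    apply Finset.sum_congr rfl
    intro j _
    simp [hg]
  have h2 : ∑ a ∈ Finset.range (n/2), g a
      = ∑ j : Fin (n / 2), f ⟨j.val, lt_of_lt_of_le j.isLt (Nat.div_le_self n 2)⟩ := by
    rw [← Fin.sum_univ_eq_sum_range]
    apply Finset.sum_congr rfl
    intro j _
    have hj : (j : ℕ) < n := lt_of_lt_of_le j.isLt (Nat.div_le_self n 2)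
    simp only [hg, dif_pos hj]
  have h3 : ∑ a ∈ Finset.range (n/2), g (n - 1 - a)
      = ∑ j : Fin (n / 2), f ⟨j.val, lt_of_lt_of_le j.isLt (Nat.div_le_self n 2)⟩ := by
    rw [← Fin.sum_univ_eq_sum_range]
    apply Finset.sum_congr rfl
    intro j _
    have hj : (j : ℕ) < n := lt_of_lt_of_le j.isLt (Nat.div_le_self n 2)
    have hj2 : n - 1 - (j : ℕ) < n := by omega
    simp only [hg, dif_pos hj2]
    rw [hf ⟨j.val, hj⟩, fin_mk_rev]
  have h4 : (n % 2) * g (n / 2) = (n % 2) * (if h : n / 2 < n then f ⟨n / 2, h⟩ else 0) := by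
    simp [hg]
  rw [h1, split_sum g n, h2, h3, h4]
  omega

lemma card_odd_filter {m : ℕ} (R : Fin m → ℕ) :
    ((Finset.univ.filter fun i => R i % 2 = 1).card : ℕ) = ∑ i, R i % 2 := by
  rw [Finset.card_filter]
  exact Finset.sum_congr rfl fun i _ => by split <;> omega

lemma sum_min_eq (k : ℕ) {p : ℕ} (v : Fin p → ℕ) :
    ((vecMS v).map (fun x => min x k)).sum = ∑ i, min (v i) k := by
  rw [vecMS, Multiset.map_map]
  rfl

end TopAux
namespace TopAux

lemma fold_lt {m : ℕ} (i : Fin m) : min i.val (m - 1 - i.val) < m := by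
  have := i.isLt; omega

lemma R_fold {m : ℕ} (R : Fin m → ℕ) (hR : ∀ i, R i = R i.rev) (i : Fin m) :
    R ⟨min i.val (m - 1 - i.val), fold_lt i⟩ = R i := by
  rcases Nat.le_total i.val (m - 1 - i.val) with h | h
  · congr 1
    apply Fin.ext
    show min i.val (m - 1 - i.val) = i.val
    omega
  · have he : (⟨min i.val (m - 1 - i.val), fold_lt i⟩ : Fin m) = i.rev := by
      apply Fin.ext
      rw [Fin.val_rev]
      show min i.val (m - 1 - i.val) = m - (i.val + 1)
      have := i.isLt
      omega
    rw [he, ← hR]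

end TopAux


open TopAux in
/-- **(0,1)-matrices with the Klein four-group symmetry `D_+`.**
`𝒜^+(R,S) ≠ ∅` iff (a) `R` and `S` are palindromic, (b) the parity conditions
from the `r_∞` and `r_0` cases hold, (c) if `n` is odd then `o(R) = s_{⌈n/2⌉}`
and if `m` is odd then `o(S) = r_{⌈m/2⌉}`, and (d) `S̆ ⪯ R̆*`, where
`R̆ = (⌊r_1/2⌋,…,⌊r_{⌊m/2⌋}/2⌋)` and `S̆ = (⌊s_1/2⌋,…,⌊s_{⌊n/2⌋}/2⌋)`. -/
theorem klein_axes_zeroOne (m n : ℕ) (R : Fin m → ℕ) (S : Fin n → ℕ)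
    (hsum : ∑ i, R i = ∑ j, S j)
    (hRle : ∀ i, R i ≤ n) (hSle : ∀ j, S j ≤ m) :
    (∃ A : Matrix (Fin m) (Fin n) ℕ,
        (∀ i j, A i j = 0 ∨ A i j = 1) ∧
        (∀ i, ∑ j, A i j = R i) ∧
        (∀ j, ∑ i, A i j = S j) ∧
        (∀ i j, A i j = A i j.rev) ∧
        (∀ i j, A i j = A i.rev j)) ↔
      ((∀ j, S j = S j.rev) ∧ (∀ i, R i = R i.rev) ∧
        (n % 2 = 0 → ∀ i, R i % 2 = 0) ∧
        (∀ hn : n % 2 = 1,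
          (Finset.univ.filter fun i => R i % 2 = 1).card ≤ S ⟨n / 2, by omega⟩) ∧
        (m % 2 = 0 → ∀ j, S j % 2 = 0) ∧
        (∀ hm : m % 2 = 1,
          (Finset.univ.filter fun j => S j % 2 = 1).card ≤ R ⟨m / 2, by omega⟩) ∧
        (∀ hn : n % 2 = 1,
          (Finset.univ.filter fun i => R i % 2 = 1).card = S ⟨n / 2, by omega⟩) ∧
        (∀ hm : m % 2 = 1,
          (Finset.univ.filter fun j => S j % 2 = 1).card = R ⟨m / 2, by omega⟩) ∧
        MajorizedBy
          (vecMS (fun j : Fin (n / 2) => S ⟨j.val, by have := j.isLt; omega⟩ / 2))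
          (conjMS (vecMS (fun i : Fin (m / 2) => R ⟨i.val, by have := i.isLt; omega⟩ / 2)))) := by
  set rfun : Fin (m / 2) → ℕ :=
    fun i => R ⟨i.val, lt_of_lt_of_le i.isLt (Nat.div_le_self m 2)⟩ / 2 with hrfun
  set sfun : Fin (n / 2) → ℕ :=
    fun j => S ⟨j.val, lt_of_lt_of_le j.isLt (Nat.div_le_self n 2)⟩ / 2 with hsfun
  constructor
  · rintro ⟨A, h01, hrow, hcol, hsJ, hsI⟩
    have haS : ∀ j, S j = S j.rev := by
      intro j
      rw [← hcol j, ← hcol j.rev]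
      exact Finset.sum_congr rfl fun i _ => hsJ i j
    have haR : ∀ i, R i = R i.rev := by
      intro i
      rw [← hrow i, ← hrow i.rev]
      exact Finset.sum_congr rfl fun j _ => hsI i j
    have hrowsplit : ∀ i, R i
        = 2 * (∑ j : Fin (n / 2), A i ⟨j.val, lt_of_lt_of_le j.isLt (Nat.div_le_self n 2)⟩)
          + (n % 2) * (if h : n / 2 < n then A i ⟨n / 2, h⟩ else 0) := by
      intro i
      rw [← hrow i]
      exact sum_fin_split (A i) (fun j => hsJ i j)
    have hcolsplit : ∀ j, S j
        = 2 * (∑ i : Fin (m / 2), A ⟨i.val, lt_of_lt_of_le i.isLt (Nat.div_le_self m 2)⟩ j)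
          + (m % 2) * (if h : m / 2 < m then A ⟨m / 2, h⟩ j else 0) := by
      intro j
      rw [← hcol j]
      exact sum_fin_split (fun i => A i j) (fun i => hsI i j)
    have hcR : ∀ hn : n % 2 = 1,
        ((Finset.univ.filter fun i => R i % 2 = 1).card : ℕ) = S ⟨n / 2, by omega⟩ := by
      intro hn
      have hmid : (n / 2) < n := by omega
      have hmidrow : ∀ i, R i % 2 = A i ⟨n / 2, hmid⟩ := by
        intro i
        have hs := hrowsplit i
        rw [dif_pos hmid, hn] at hs
        rcases h01 i ⟨n / 2, hmid⟩ with h | h <;> omega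
      rw [card_odd_filter, Finset.sum_congr rfl fun i _ => hmidrow i, hcol ⟨n / 2, hmid⟩]
    have hcS : ∀ hm : m % 2 = 1,
        ((Finset.univ.filter fun j => S j % 2 = 1).card : ℕ) = R ⟨m / 2, by omega⟩ := by
      intro hm
      have hmid : (m / 2) < m := by omega
      have hmidcol : ∀ j, S j % 2 = A ⟨m / 2, hmid⟩ j := by
        intro j
        have hs := hcolsplit j
        rw [dif_pos hmid, hm] at hs
        rcases h01 ⟨m / 2, hmid⟩ j with h | h <;> omega
      rw [card_odd_filter, Finset.sum_congr rfl fun j _ => hmidcol j, hrow ⟨m / 2, hmid⟩]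
    refine ⟨haS, haR, ?_, fun hn => le_of_eq (hcR hn), ?_, fun hm => le_of_eq (hcS hm),
      hcR, hcS, ?_⟩
    · intro hn i
      have hs := hrowsplit i
      rw [hn] at hs
      omega
    · intro hm j
      have hs := hcolsplit j
      rw [hm] at hs
      omega
    · set B : Matrix (Fin (m / 2)) (Fin (n / 2)) ℕ :=
        fun i j => A ⟨i.val, lt_of_lt_of_le i.isLt (Nat.div_le_self m 2)⟩
          ⟨j.val, lt_of_lt_of_le j.isLt (Nat.div_le_self n 2)⟩ with hB
      have h01' : ∀ i j, B i j = 0 ∨ B i j = 1 := fun i j => h01 _ _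
      have hrowB : ∀ i, ∑ j, B i j = rfun i := by
        intro i
        have hs := hrowsplit ⟨i.val, lt_of_lt_of_le i.isLt (Nat.div_le_self m 2)⟩
        have hle : (if h : n / 2 < n then
            A ⟨i.val, lt_of_lt_of_le i.isLt (Nat.div_le_self m 2)⟩ ⟨n / 2, h⟩ else 0) ≤ 1 := by
          split
          · next h =>
              rcases h01 ⟨i.val, lt_of_lt_of_le i.isLt (Nat.div_le_self m 2)⟩ ⟨n / 2, h⟩
                with h' | h' <;> omega
          · omega
        simp only [hrfun, hB]
        have hn01 : n % 2 = 0 ∨ n % 2 = 1 := by omega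
        rcases hn01 with h2 | h2 <;> rw [h2] at hs <;> omega
      have hcolB : ∀ j, ∑ i, B i j = sfun j := by
        intro j
        have hs := hcolsplit ⟨j.val, lt_of_lt_of_le j.isLt (Nat.div_le_self n 2)⟩
        have hle : (if h : m / 2 < m then
            A ⟨m / 2, h⟩ ⟨j.val, lt_of_lt_of_le j.isLt (Nat.div_le_self n 2)⟩ else 0) ≤ 1 := by
          split
          · next h =>
              rcases h01 ⟨m / 2, h⟩ ⟨j.val, lt_of_lt_of_le j.isLt (Nat.div_le_self n 2)⟩
                with h' | h' <;> omega
          · omega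
        simp only [hsfun, hB]
        have hm01 : m % 2 = 0 ∨ m % 2 = 1 := by omega
        rcases hm01 with h2 | h2 <;> rw [h2] at hs <;> omega
      constructor
      · have h1 : (vecMS sfun).sum = ∑ j, sfun j := vecMS_sum sfun
        have h2 : (conjMS (vecMS rfun)).sum = ∑ i, rfun i := by
          rw [conj_sum, vecMS_sum]
        have h3 : ∑ j, sfun j = ∑ i, rfun i := by
          rw [← Finset.sum_congr rfl fun j (_ : j ∈ Finset.univ) => (hcolB j),
            ← Finset.sum_congr rfl fun i (_ : i ∈ Finset.univ) => (hrowB i), Finset.sum_comm]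
        rw [h1, h2, h3]
      · intro k
        rw [conj_topSum, sum_min_eq]
        exact GR_forward rfun sfun B h01' hrowB hcolB k
  · rintro ⟨haS, haR, hb1, -, hb3, -, hc1, hc2, hmaj⟩
    set RM : ℕ := (if h : m / 2 < m then R ⟨m / 2, h⟩ else 0) with hRM
    set SM : ℕ := (if h : n / 2 < n then S ⟨n / 2, h⟩ else 0) with hSM
    set HR : ℕ := ∑ i : Fin (m / 2), R ⟨i.val, lt_of_lt_of_le i.isLt (Nat.div_le_self m 2)⟩
      with hHR
    set HS : ℕ := ∑ j : Fin (n / 2), S ⟨j.val, lt_of_lt_of_le j.isLt (Nat.div_le_self n 2)⟩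
      with hHS
    set ORm : ℕ := ∑ i : Fin (m / 2),
      R ⟨i.val, lt_of_lt_of_le i.isLt (Nat.div_le_self m 2)⟩ % 2 with hORm
    set OSn : ℕ := ∑ j : Fin (n / 2),
      S ⟨j.val, lt_of_lt_of_le j.isLt (Nat.div_le_self n 2)⟩ % 2 with hOSn
    have e1 : ∑ i, R i = 2 * HR + (m % 2) * RM := sum_fin_split R haR
    have e2 : HR = 2 * (∑ i, rfun i) + ORm := by
      rw [hHR, hORm, Finset.mul_sum, ← Finset.sum_add_distrib]
      exact Finset.sum_congr rfl fun i _ => by simp only [hrfun]; omega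
    have e3 : ((Finset.univ.filter fun i => R i % 2 = 1).card : ℕ)
        = 2 * ORm + (m % 2) * (RM % 2) := by
      rw [card_odd_filter]
      have hsp := sum_fin_split (fun i => R i % 2) (fun i => by show R i % 2 = R i.rev % 2; rw [← haR i])
      rw [hsp]
      have hd : (if h : m / 2 < m then R ⟨m / 2, h⟩ % 2 else 0) = RM % 2 := by
        rw [hRM]; split <;> rfl
      rw [hd, hORm]
    have e4 : ∑ j, S j = 2 * HS + (n % 2) * SM := sum_fin_split S haS
    have e5 : HS = 2 * (∑ j, sfun j) + OSn := by
      rw [hHS, hOSn, Finset.mul_sum, ← Finset.sum_add_distrib]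
      exact Finset.sum_congr rfl fun j _ => by simp only [hsfun]; omega
    have e6 : ((Finset.univ.filter fun j => S j % 2 = 1).card : ℕ)
        = 2 * OSn + (n % 2) * (SM % 2) := by
      rw [card_odd_filter]
      have hsp := sum_fin_split (fun j => S j % 2) (fun j => by show S j % 2 = S j.rev % 2; rw [← haS j])
      rw [hsp]
      have hd : (if h : n / 2 < n then S ⟨n / 2, h⟩ % 2 else 0) = SM % 2 := by
        rw [hSM]; split <;> rfl
      rw [hd, hOSn]
    have hn01 : n % 2 = 0 ∨ n % 2 = 1 := by omega
    have hm01 : m % 2 = 0 ∨ m % 2 = 1 := by omega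
    have hcard_n : n % 2 = 1 → ((Finset.univ.filter fun i => R i % 2 = 1).card : ℕ) = SM := by
      intro hn
      rw [hc1 hn, hSM, dif_pos (show n / 2 < n by omega)]
    have hcard_m : m % 2 = 1 → ((Finset.univ.filter fun j => S j % 2 = 1).card : ℕ) = RM := by
      intro hm
      rw [hc2 hm, hRM, dif_pos (show m / 2 < m by omega)]
    have hzero_n : n % 2 = 0 → ((Finset.univ.filter fun i => R i % 2 = 1).card : ℕ) = 0 := by
      intro hn
      rw [Finset.card_eq_zero.mpr]
      apply Finset.filter_eq_empty_iff.mpr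
      intro i _
      have := hb1 hn i
      omega
    have hzero_m : m % 2 = 0 → ((Finset.univ.filter fun j => S j % 2 = 1).card : ℕ) = 0 := by
      intro hm
      rw [Finset.card_eq_zero.mpr]
      apply Finset.filter_eq_empty_iff.mpr
      intro j _
      have := hb3 hm j
      omega
    have hsum' : ∑ i, rfun i = ∑ j, sfun j := by
      rcases hn01 with hn | hn <;> rcases hm01 with hm | hm <;>
        rw [hn] at e4 e6 <;> rw [hm] at e1 e3
      · have := hzero_n hn; have := hzero_m hm
        omega
      · have := hzero_n hn; have := hcard_m hm
        omega
      · have := hcard_n hn; have := hzero_m hm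
        omega
      · have := hcard_n hn; have := hcard_m hm
        omega
    have hmaj' : ∀ k, topSum (vecMS sfun) k ≤ ∑ i, min (rfun i) k := by
      intro k
      have h := hmaj.2 k
      rw [conj_topSum, sum_min_eq] at h
      exact h
    have hrle' : ∀ i, rfun i ≤ n / 2 := by
      intro i
      have := hRle ⟨i.val, lt_of_lt_of_le i.isLt (Nat.div_le_self m 2)⟩
      simp only [hrfun]
      omega
    have hsle' : ∀ j, sfun j ≤ m / 2 := by
      intro j
      have := hSle ⟨j.val, lt_of_lt_of_le j.isLt (Nat.div_le_self n 2)⟩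
      simp only [hsfun]
      omega
    obtain ⟨B, h01B, hrowB, hcolB⟩ := GR_exists (n / 2) (m / 2) rfun sfun hrle' hsle' hsum' hmaj'
    set A : Matrix (Fin m) (Fin n) ℕ := fun i j =>
      if hi : min i.val (m - 1 - i.val) < m / 2 then
        if hj : min j.val (n - 1 - j.val) < n / 2 then
          B ⟨min i.val (m - 1 - i.val), hi⟩ ⟨min j.val (n - 1 - j.val), hj⟩
        else R ⟨min i.val (m - 1 - i.val), fold_lt i⟩ % 2
      else
        if hj : min j.val (n - 1 - j.val) < n / 2 then
          S ⟨min j.val (n - 1 - j.val), fold_lt j⟩ % 2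
        else R i % 2
      with hA
    have EV1 : ∀ (i : Fin m) (j : Fin n) (hi : min i.val (m - 1 - i.val) < m / 2)
        (hj : min j.val (n - 1 - j.val) < n / 2),
        A i j = B ⟨min i.val (m - 1 - i.val), hi⟩ ⟨min j.val (n - 1 - j.val), hj⟩ := by
      intro i j hi hj
      simp only [hA]
      rw [dif_pos hi, dif_pos hj]
    have EV2 : ∀ (i : Fin m) (j : Fin n) (hi : min i.val (m - 1 - i.val) < m / 2)
        (_hj : ¬ min j.val (n - 1 - j.val) < n / 2),
        A i j = R ⟨min i.val (m - 1 - i.val), fold_lt i⟩ % 2 := by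
      intro i j hi hj
      simp only [hA]
      rw [dif_pos hi, dif_neg hj]
    have EV3 : ∀ (i : Fin m) (j : Fin n) (_hi : ¬ min i.val (m - 1 - i.val) < m / 2)
        (hj : min j.val (n - 1 - j.val) < n / 2),
        A i j = S ⟨min j.val (n - 1 - j.val), fold_lt j⟩ % 2 := by
      intro i j hi hj
      simp only [hA]
      rw [dif_neg hi, dif_pos hj]
    have EV4 : ∀ (i : Fin m) (j : Fin n) (_hi : ¬ min i.val (m - 1 - i.val) < m / 2)
        (_hj : ¬ min j.val (n - 1 - j.val) < n / 2),
        A i j = R i % 2 := by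
      intro i j hi hj
      simp only [hA]
      rw [dif_neg hi, dif_neg hj]
    have ei : ∀ i : Fin m, min i.rev.val (m - 1 - i.rev.val) = min i.val (m - 1 - i.val) := by
      intro i; rw [Fin.val_rev]; have := i.isLt; omega
    have ej : ∀ j : Fin n, min j.rev.val (n - 1 - j.rev.val) = min j.val (n - 1 - j.val) := by
      intro j; rw [Fin.val_rev]; have := j.isLt; omega
    have hsymJ : ∀ i j, A i j = A i (j.rev) := by
      intro i j
      simp only [hA, ej]
    have hsymI : ∀ i j, A i j = A i.rev j := by
      intro i j
      simp only [hA, ei, haR i]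
    have h01A : ∀ i j, A i j = 0 ∨ A i j = 1 := by
      intro i j
      by_cases hi : min i.val (m - 1 - i.val) < m / 2 <;>
        by_cases hj : min j.val (n - 1 - j.val) < n / 2
      · rw [EV1 i j hi hj]; exact h01B _ _
      · rw [EV2 i j hi hj]; omega
      · rw [EV3 i j hi hj]; omega
      · rw [EV4 i j hi hj]; omega
    have hrowA : ∀ i, ∑ j, A i j = R i := by
      intro i
      have hsplit : ∑ j, A i j
          = 2 * (∑ j : Fin (n / 2), A i ⟨j.val, lt_of_lt_of_le j.isLt (Nat.div_le_self n 2)⟩)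
            + (n % 2) * (if h : n / 2 < n then A i ⟨n / 2, h⟩ else 0) :=
        sum_fin_split (A i) (fun j => hsymJ i j)
      have hfold : R ⟨min i.val (m - 1 - i.val), fold_lt i⟩ = R i := R_fold R haR i
      by_cases hi : min i.val (m - 1 - i.val) < m / 2
      · have hXj : ∀ j : Fin (n / 2),
            A i ⟨j.val, lt_of_lt_of_le j.isLt (Nat.div_le_self n 2)⟩
              = B ⟨min i.val (m - 1 - i.val), hi⟩ j := by
          intro j
          have hjv : (j : ℕ) < n / 2 := j.isLt
          have hj' : min j.val (n - 1 - j.val) < n / 2 := by omega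
          rw [EV1 i ⟨j.val, lt_of_lt_of_le j.isLt (Nat.div_le_self n 2)⟩ hi hj']
          congr 1
          apply Fin.ext
          show min j.val (n - 1 - j.val) = j.val
          omega
        have hX : (∑ j : Fin (n / 2),
            A i ⟨j.val, lt_of_lt_of_le j.isLt (Nat.div_le_self n 2)⟩)
              = R ⟨min i.val (m - 1 - i.val), fold_lt i⟩ / 2 := by
          rw [Finset.sum_congr rfl fun j _ => hXj j, hrowB ⟨min i.val (m - 1 - i.val), hi⟩]
        rcases (by omega : n % 2 = 0 ∨ n % 2 = 1) with hn | hn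
        · have hRiev := hb1 hn i
          rw [hsplit, hX, hn, hfold]
          omega
        · have hmidlt : n / 2 < n := by omega
          have hm' : ¬ min (n / 2) (n - 1 - n / 2) < n / 2 := by omega
          have hmid : A i ⟨n / 2, hmidlt⟩ = R ⟨min i.val (m - 1 - i.val), fold_lt i⟩ % 2 :=
            EV2 i ⟨n / 2, hmidlt⟩ hi hm'
          rw [hsplit, hX, hn, dif_pos hmidlt, hmid, hfold]
          omega
      · have hmi : m % 2 = 1 ∧ i.val = m / 2 := by have := i.isLt; omega
        have hRMi : RM = R i := by
          rw [hRM, dif_pos (show m / 2 < m by omega)]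
          congr 1
          exact Fin.ext hmi.2.symm
        have hXj : ∀ j : Fin (n / 2),
            A i ⟨j.val, lt_of_lt_of_le j.isLt (Nat.div_le_self n 2)⟩
              = S ⟨j.val, lt_of_lt_of_le j.isLt (Nat.div_le_self n 2)⟩ % 2 := by
          intro j
          have hjv : (j : ℕ) < n / 2 := j.isLt
          have hj' : min j.val (n - 1 - j.val) < n / 2 := by omega
          rw [EV3 i ⟨j.val, lt_of_lt_of_le j.isLt (Nat.div_le_self n 2)⟩ hi hj']
          have he : (⟨min j.val (n - 1 - j.val),
              fold_lt (⟨j.val, lt_of_lt_of_le j.isLt (Nat.div_le_self n 2)⟩ : Fin n)⟩ : Fin n)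
              = ⟨j.val, lt_of_lt_of_le j.isLt (Nat.div_le_self n 2)⟩ := by
            apply Fin.ext
            show min j.val (n - 1 - j.val) = j.val
            omega
          rw [he]
        have hX : (∑ j : Fin (n / 2),
            A i ⟨j.val, lt_of_lt_of_le j.isLt (Nat.div_le_self n 2)⟩) = OSn := by
          rw [Finset.sum_congr rfl fun j _ => hXj j, ← hOSn]
        rcases (by omega : n % 2 = 0 ∨ n % 2 = 1) with hn | hn
        · have hcm := hcard_m hmi.1
          rw [hn] at e6
          rw [hsplit, hX, hn]
          omega
        · have hmidlt : n / 2 < n := by omega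
          have hm' : ¬ min (n / 2) (n - 1 - n / 2) < n / 2 := by omega
          have hmid : A i ⟨n / 2, hmidlt⟩ = R i % 2 := EV4 i ⟨n / 2, hmidlt⟩ hi hm'
          have hcm := hcard_m hmi.1
          have hcn := hcard_n hn
          rw [hn] at e6
          rw [hmi.1] at e3
          rw [hsplit, hX, hn, dif_pos hmidlt, hmid]
          omega
    have hcolA : ∀ j, ∑ i, A i j = S j := by
      intro j
      have hsplit : ∑ i, A i j
          = 2 * (∑ i : Fin (m / 2), A ⟨i.val, lt_of_lt_of_le i.isLt (Nat.div_le_self m 2)⟩ j)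
            + (m % 2) * (if h : m / 2 < m then A ⟨m / 2, h⟩ j else 0) :=
        sum_fin_split (fun i => A i j) (fun i => hsymI i j)
      have hfold : S ⟨min j.val (n - 1 - j.val), fold_lt j⟩ = S j := R_fold S haS j
      by_cases hj : min j.val (n - 1 - j.val) < n / 2
      · have hXi : ∀ i : Fin (m / 2),
            A ⟨i.val, lt_of_lt_of_le i.isLt (Nat.div_le_self m 2)⟩ j
              = B i ⟨min j.val (n - 1 - j.val), hj⟩ := by
          intro i
          have hiv : (i : ℕ) < m / 2 := i.isLt
          have hi' : min i.val (m - 1 - i.val) < m / 2 := by omega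
          rw [EV1 ⟨i.val, lt_of_lt_of_le i.isLt (Nat.div_le_self m 2)⟩ j hi' hj]
          congr 1
          apply Fin.ext
          show min i.val (m - 1 - i.val) = i.val
          omega
        have hX : (∑ i : Fin (m / 2),
            A ⟨i.val, lt_of_lt_of_le i.isLt (Nat.div_le_self m 2)⟩ j)
              = S ⟨min j.val (n - 1 - j.val), fold_lt j⟩ / 2 := by
          rw [Finset.sum_congr rfl fun i _ => hXi i, hcolB ⟨min j.val (n - 1 - j.val), hj⟩]
        rcases (by omega : m % 2 = 0 ∨ m % 2 = 1) with hm | hm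
        · have hSjev := hb3 hm j
          rw [hsplit, hX, hm, hfold]
          omega
        · have hmidlt : m / 2 < m := by omega
          have hm' : ¬ min (m / 2) (m - 1 - m / 2) < m / 2 := by omega
          have hmid : A ⟨m / 2, hmidlt⟩ j
              = S ⟨min j.val (n - 1 - j.val), fold_lt j⟩ % 2 :=
            EV3 ⟨m / 2, hmidlt⟩ j hm' hj
          rw [hsplit, hX, hm, dif_pos hmidlt, hmid, hfold]
          omega
      · have hnj : n % 2 = 1 ∧ j.val = n / 2 := by have := j.isLt; omega
        have hSMj : SM = S j := by
          rw [hSM, dif_pos (show n / 2 < n by omega)]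
          congr 1
          exact Fin.ext hnj.2.symm
        have hXi : ∀ i : Fin (m / 2),
            A ⟨i.val, lt_of_lt_of_le i.isLt (Nat.div_le_self m 2)⟩ j
              = R ⟨i.val, lt_of_lt_of_le i.isLt (Nat.div_le_self m 2)⟩ % 2 := by
          intro i
          have hiv : (i : ℕ) < m / 2 := i.isLt
          have hi' : min i.val (m - 1 - i.val) < m / 2 := by omega
          rw [EV2 ⟨i.val, lt_of_lt_of_le i.isLt (Nat.div_le_self m 2)⟩ j hi' hj]
          have he : (⟨min i.val (m - 1 - i.val),
              fold_lt (⟨i.val, lt_of_lt_of_le i.isLt (Nat.div_le_self m 2)⟩ : Fin m)⟩ : Fin m)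
              = ⟨i.val, lt_of_lt_of_le i.isLt (Nat.div_le_self m 2)⟩ := by
            apply Fin.ext
            show min i.val (m - 1 - i.val) = i.val
            omega
          rw [he]
        have hX : (∑ i : Fin (m / 2),
            A ⟨i.val, lt_of_lt_of_le i.isLt (Nat.div_le_self m 2)⟩ j) = ORm := by
          rw [Finset.sum_congr rfl fun i _ => hXi i, ← hORm]
        have hcn := hcard_n hnj.1
        rcases (by omega : m % 2 = 0 ∨ m % 2 = 1) with hm | hm
        · rw [hm] at e3
          rw [hsplit, hX, hm, ← hSMj]
          omega
        · have hmidlt : m / 2 < m := by omega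
          have hm' : ¬ min (m / 2) (m - 1 - m / 2) < m / 2 := by omega
          have hmid : A ⟨m / 2, hmidlt⟩ j = R ⟨m / 2, hmidlt⟩ % 2 :=
            EV4 ⟨m / 2, hmidlt⟩ j hm' hj
          have hRMm : RM = R ⟨m / 2, hmidlt⟩ := by
            rw [hRM, dif_pos hmidlt]
          rw [hm] at e3
          rw [hsplit, hX, hm, dif_pos hmidlt, hmid, ← hRMm, ← hSMj]
          omega
    exact ⟨A, h01A, hrowA, hcolA, hsymJ, hsymI⟩
end

section
/- Let R and S be nonnegative real vectors in ℝ^n with equal component sums. (I) There exists an n×n nonnegative real matrix A with row sum vector R and column sum vector S satisfying ρ_{π/2} A = A (invariance under rotation by π/2, i.e. a_{i,j} = a_{n+1−j, i} for all i,j) if and only if (a) R = S and (b) R is palindromic. (II) If R and S are nonnegative integer vectors, there exists such a matrix with nonnegative integer entries if and only if (a) and (b) hold together with at least one of: (c) r_1 + r_2 + ⋯ + r_⌊n/2⌋ is even, or (d) n is odd and r_⌈n/2⌉ ≥ 2. -/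
open Finset

namespace QTaux

variable {n : ℕ}

def wt (i j c : Fin n) : ℕ :=
  (if c = i then 1 else 0) + (if c = j.rev then 1 else 0) +
  (if c = i.rev then 1 else 0) + (if c = j then 1 else 0)

def E (i j : Fin n) : Matrix (Fin n) (Fin n) ℕ := fun a b =>
  (if a = i ∧ b = j then 1 else 0) + (if a = j.rev ∧ b = i then 1 else 0) +
  (if a = i.rev ∧ b = j.rev then 1 else 0) + (if a = j ∧ b = i.rev then 1 else 0)

lemma E_symm (i j a b : Fin n) : E i j a b = E i j b.rev a := by
  unfold E
  have e1 : (b.rev = i ∧ a = j) ↔ (a = j ∧ b = i.rev) := by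
    rw [Fin.rev_eq_iff]; exact and_comm
  have e2 : (b.rev = j.rev ∧ a = i) ↔ (a = i ∧ b = j) := by
    rw [Fin.rev_eq_iff, Fin.rev_rev]; exact and_comm
  have e3 : (b.rev = i.rev ∧ a = j.rev) ↔ (a = j.rev ∧ b = i) := by
    rw [Fin.rev_eq_iff, Fin.rev_rev]; exact and_comm
  have e4 : (b.rev = j ∧ a = i.rev) ↔ (a = i.rev ∧ b = j.rev) := by
    rw [Fin.rev_eq_iff]; exact and_comm
  rw [if_congr e1 rfl rfl, if_congr e2 rfl rfl, if_congr e3 rfl rfl, if_congr e4 rfl rfl]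
  ring

lemma sum_ind (P : Prop) [Decidable P] (y : Fin n) {v : ℕ} :
    (∑ b : Fin n, if P ∧ b = y then v else 0) = if P then v else 0 := by
  by_cases h : P <;> simp [h]

lemma sum_ind' (x : Fin n) (P : Prop) [Decidable P] {v : ℕ} :
    (∑ a : Fin n, if a = x ∧ P then v else 0) = if P then v else 0 := by
  by_cases h : P <;> simp [h]

lemma E_row (i j a : Fin n) : ∑ b, E i j a b = wt i j a := by
  unfold E wt
  rw [Finset.sum_add_distrib, Finset.sum_add_distrib, Finset.sum_add_distrib,
    sum_ind, sum_ind, sum_ind, sum_ind]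

lemma E_col (i j b : Fin n) : ∑ a, E i j a b = wt i j b := by
  unfold E wt
  rw [Finset.sum_add_distrib, Finset.sum_add_distrib, Finset.sum_add_distrib,
    sum_ind', sum_ind', sum_ind', sum_ind']
  ring

end QTaux

namespace QTaux
variable {n : ℕ}

lemma wt_rev (i j c : Fin n) : wt i j c.rev = wt i j c := by
  unfold wt
  have e1 : (c.rev = i) ↔ (c = i.rev) := Fin.rev_eq_iff
  have e2 : (c.rev = j.rev) ↔ (c = j) := by rw [Fin.rev_eq_iff, Fin.rev_rev]
  have e3 : (c.rev = i.rev) ↔ (c = i) := by rw [Fin.rev_eq_iff, Fin.rev_rev]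
  have e4 : (c.rev = j) ↔ (c = j.rev) := Fin.rev_eq_iff
  rw [if_congr e1 rfl rfl, if_congr e2 rfl rfl, if_congr e3 rfl rfl, if_congr e4 rfl rfl]
  ring

lemma sum_wt_T (i j : Fin n) (hi : (i : ℕ) < n / 2) (hj : (j : ℕ) < n / 2) :
    ∑ c ∈ Finset.univ.filter (fun c : Fin n => (c : ℕ) < n / 2), wt i j c = 2 := by
  unfold wt
  rw [Finset.sum_add_distrib, Finset.sum_add_distrib, Finset.sum_add_distrib]
  have hmem : ∀ x : Fin n, (x ∈ Finset.univ.filter (fun c : Fin n => (c : ℕ) < n / 2)) ↔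
      (x : ℕ) < n / 2 := by intro x; simp
  have h1 : ∀ x : Fin n, (∑ c ∈ Finset.univ.filter (fun c : Fin n => (c : ℕ) < n / 2),
      if c = x then 1 else 0) = if (x : ℕ) < n / 2 then 1 else 0 := by
    intro x
    rw [Finset.sum_ite_eq' (Finset.univ.filter (fun c : Fin n => (c : ℕ) < n / 2)) x (fun _ => 1)]
    simp
  rw [h1, h1, h1, h1]
  have hri : ¬ ((i.rev : ℕ) < n / 2) := by
    have := i.isLt; rw [Fin.val_rev]; omega
  have hrj : ¬ ((j.rev : ℕ) < n / 2) := by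
    have := j.isLt; rw [Fin.val_rev]; omega
  simp only [Fin.val_rev] at hri hrj
  simp [hi, hj, hri, hrj]

lemma wt_mid (hn : n % 2 = 1) (i j : Fin n) (hi : (i : ℕ) < n / 2) (hj : (j : ℕ) < n / 2) :
    wt i j ⟨n / 2, Nat.div_lt_self (by omega) (by norm_num)⟩ = 0 := by
  have hri := i.isLt; have hrj := j.isLt
  have h1 : (⟨n / 2, Nat.div_lt_self (by omega) (by norm_num)⟩ : Fin n) ≠ i := by simp [Fin.ext_iff]; omega
  have h2 : (⟨n / 2, Nat.div_lt_self (by omega) (by norm_num)⟩ : Fin n) ≠ j.rev := by simp [Fin.ext_iff, Fin.val_rev]; omega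
  have h3 : (⟨n / 2, Nat.div_lt_self (by omega) (by norm_num)⟩ : Fin n) ≠ i.rev := by simp [Fin.ext_iff, Fin.val_rev]; omega
  have h4 : (⟨n / 2, Nat.div_lt_self (by omega) (by norm_num)⟩ : Fin n) ≠ j := by simp [Fin.ext_iff]; omega
  simp [wt, h1, h2, h3, h4]

lemma mid_rev (hn : n % 2 = 1) : (⟨n / 2, Nat.div_lt_self (by omega) (by norm_num)⟩ : Fin n).rev = ⟨n / 2, Nat.div_lt_self (by omega) (by norm_num)⟩ := by
  apply Fin.ext; rw [Fin.val_rev]; simp; omega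

lemma sum_split_even (hn : n % 2 = 0) (g : Fin n → ℕ) :
    ∑ j, g j = ∑ j ∈ Finset.univ.filter (fun c : Fin n => (c : ℕ) < n / 2), (g j + g j.rev) := by
  rw [Finset.sum_add_distrib]
  have h1 : ∑ j ∈ Finset.univ.filter (fun c : Fin n => (c : ℕ) < n / 2), g j.rev
      = ∑ j ∈ Finset.univ.filter (fun c : Fin n => ¬ ((c : ℕ) < n / 2)), g j := by
    apply Finset.sum_equiv Fin.revPerm
    · intro c; simp [Fin.val_rev]; have := c.isLt; omega
    · intro c _; rfl
  rw [h1, Finset.sum_filter_add_sum_filter_not]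

lemma sum_split_odd (hn : n % 2 = 1) (g : Fin n → ℕ) :
    ∑ j, g j = (∑ j ∈ Finset.univ.filter (fun c : Fin n => (c : ℕ) < n / 2), (g j + g j.rev))
      + g ⟨n / 2, Nat.div_lt_self (by omega) (by norm_num)⟩ := by
  rw [Finset.sum_add_distrib]
  have h1 : ∑ j ∈ Finset.univ.filter (fun c : Fin n => (c : ℕ) < n / 2), g j.rev
      = ∑ j ∈ Finset.univ.filter (fun c : Fin n => n / 2 < (c : ℕ)), g j := by
    apply Finset.sum_equiv Fin.revPerm
    · intro c; simp [Fin.val_rev]; have := c.isLt; omega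
    · intro c _; rfl
  rw [h1]
  have h2 : Finset.univ.filter (fun c : Fin n => ¬ ((c : ℕ) < n / 2))
      = insert (⟨n / 2, Nat.div_lt_self (by omega) (by norm_num)⟩ : Fin n)
        (Finset.univ.filter (fun c : Fin n => n / 2 < (c : ℕ))) := by
    ext c; simp [Fin.ext_iff]; omega
  have h3 : (⟨n / 2, Nat.div_lt_self (by omega) (by norm_num)⟩ : Fin n) ∉
      Finset.univ.filter (fun c : Fin n => n / 2 < (c : ℕ)) := by simp
  have := Finset.sum_filter_add_sum_filter_not Finset.univ
    (fun c : Fin n => (c : ℕ) < n / 2) g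
  rw [h2, Finset.sum_insert h3] at this
  omega

end QTaux

namespace QTaux
variable {n : ℕ}

lemma sum_rev {M : Type*} [AddCommMonoid M] (f : Fin n → M) :
    ∑ i : Fin n, f i.rev = ∑ i, f i :=
  Equiv.sum_comp Fin.revPerm f

lemma off_support (a : Fin n) (h1 : ¬ ((a : ℕ) < n / 2)) (h2 : ¬ ((a.rev : ℕ) < n / 2)) :
    a.rev = a := by
  apply Fin.ext; rw [Fin.val_rev] at *; have := a.isLt; omega

lemma case_zero (R : Fin n → ℕ) (hpal : ∀ i, R i = R i.rev)
    (h0 : ∀ i : Fin n, (i : ℕ) < n / 2 → R i = 0) :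
    ∃ A : Matrix (Fin n) (Fin n) ℕ, (∀ a, ∑ b, A a b = R a) ∧ (∀ b, ∑ a, A a b = R b) ∧
      (∀ a b, A a b = A b.rev a) := by
  have hz : ∀ a : Fin n, a.rev ≠ a → R a = 0 := by
    intro a ha
    by_cases h1 : (a : ℕ) < n / 2
    · exact h0 a h1
    by_cases h2 : ((a.rev : ℕ) < n / 2)
    · rw [hpal a]; exact h0 a.rev h2
    · exact absurd (off_support a h1 h2) ha
  refine ⟨fun a b => if a = b ∧ a.rev = a then R a else 0, ?_, ?_, ?_⟩
  · intro a
    by_cases h : a.rev = a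
    · simp only [h, and_true]
      rw [Finset.sum_ite_eq Finset.univ a (fun _ => R a)]; simp
    · simp only [h, and_false, if_false, Finset.sum_const_zero]
      exact (hz a h).symm
  · intro b
    rw [Finset.sum_eq_single_of_mem b (Finset.mem_univ b)]
    · by_cases h : b.rev = b
      · simp [h]
      · simp only [h, and_false, if_false]; exact (hz b h).symm
    · intro a _ hab; simp [hab]
  · intro a b
    show (if a = b ∧ a.rev = a then R a else 0) =
      (if b.rev = a ∧ (b.rev).rev = b.rev then R b.rev else 0)
    by_cases h : a = b ∧ a.rev = a
    · obtain ⟨h1, h2⟩ := h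
      subst h1
      simp [h2]
    · rw [if_neg h, if_neg]
      rintro ⟨k1, k2⟩
      rw [Fin.rev_rev] at k2
      apply h
      have hb : b.rev = b := k2.symm
      refine ⟨by rw [← k1, hb], ?_⟩
      rw [← k1, Fin.rev_rev, hb]

end QTaux

namespace QTaux
variable {n : ℕ}

lemma case_single (hn : n % 2 = 1) (R : Fin n → ℕ) (hpal : ∀ i, R i = R i.rev)
    (i0 : Fin n) (hi0 : (i0 : ℕ) < n / 2) (h1 : R i0 = 1)
    (h0 : ∀ j : Fin n, (j : ℕ) < n / 2 → j ≠ i0 → R j = 0)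
    (hmid : 2 ≤ R ⟨n / 2, Nat.div_lt_self (by omega) (by norm_num)⟩) :
    ∃ A : Matrix (Fin n) (Fin n) ℕ, (∀ a, ∑ b, A a b = R a) ∧ (∀ b, ∑ a, A a b = R b) ∧
      (∀ a b, A a b = A b.rev a) := by
  set mid : Fin n := ⟨n / 2, Nat.div_lt_self (by omega) (by norm_num)⟩ with hmiddef
  have hmr : mid.rev = mid := mid_rev hn
  have hi0v := i0.isLt
  have e1 : i0 ≠ mid := by simp [hmiddef, Fin.ext_iff]; omega
  have e2 : i0.rev ≠ mid := by simp [hmiddef, Fin.ext_iff, Fin.val_rev]; omega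
  have e3 : i0 ≠ i0.rev := by simp [Fin.ext_iff, Fin.val_rev]; omega
  have main : ∀ c : Fin n, wt mid i0 c + (if c = mid then R mid - 2 else 0) = R c := by
    intro c
    by_cases hc1 : c = mid
    · have w : wt mid i0 mid = 2 := by
        simp [wt, hmr, (show mid ≠ i0.rev from fun h => e2 h.symm),
          (show mid ≠ i0 from fun h => e1 h.symm)]
      rw [hc1, w, if_pos rfl]; omega
    · rw [if_neg hc1, add_zero]
      by_cases hc2 : c = i0
      · have w : wt mid i0 i0 = 1 := by
          simp [wt, (show i0 ≠ mid from e1), e3,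
            (show i0 ≠ mid.rev from by rw [hmr]; exact e1)]
        rw [hc2, w, h1]
      · by_cases hc3 : c = i0.rev
        · have w : wt mid i0 i0.rev = 1 := by
            simp [wt, (show i0.rev ≠ mid from e2),
              (show i0.rev ≠ mid.rev from by rw [hmr]; exact e2),
              (show i0.rev ≠ i0 from fun h => e3 h.symm)]
          rw [hc3, w, ← hpal i0, h1]
        · have w : wt mid i0 c = 0 := by
            simp [wt, hc1, hc2, hc3, (show c ≠ mid.rev from by rw [hmr]; exact hc1)]
          rw [w]
          by_cases hA : (c : ℕ) < n / 2
          · exact (h0 c hA hc2).symm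
          · by_cases hB : ((c.rev : ℕ) < n / 2)
            · have hcr : c.rev ≠ i0 := by
                intro h; apply hc3; rw [← h, Fin.rev_rev]
              rw [hpal c]; exact (h0 c.rev hB hcr).symm
            · exfalso
              have := off_support c hA hB
              apply hc1
              apply Fin.ext
              have h4 := Fin.ext_iff.mp this
              rw [Fin.val_rev] at h4
              have := c.isLt
              simp [hmiddef]
              omega
  refine ⟨fun a b => E mid i0 a b + (if a = mid ∧ b = mid then R mid - 2 else 0), ?_, ?_, ?_⟩
  · intro a
    rw [Finset.sum_add_distrib, E_row, sum_ind]
    exact main a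
  · intro b
    rw [Finset.sum_add_distrib, E_col, sum_ind']
    exact main b
  · intro a b
    show E mid i0 a b + _ = E mid i0 b.rev a + _
    rw [E_symm mid i0 a b]
    congr 1
    apply if_congr _ rfl rfl
    rw [and_comm]
    apply and_congr_left
    intro _
    rw [Fin.rev_eq_iff, hmr]

end QTaux

namespace QTaux
variable {n : ℕ}

lemma exists_qt : ∀ (N : ℕ) (R : Fin n → ℕ),
    (∑ i ∈ Finset.univ.filter (fun i : Fin n => (i : ℕ) < n / 2), R i) ≤ N →
    (∀ i, R i = R i.rev) →
    ((∑ i ∈ Finset.univ.filter (fun i : Fin n => (i : ℕ) < n / 2), R i) % 2 = 0 ∨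
      ∃ hn : n % 2 = 1, 2 ≤ R ⟨n / 2, Nat.div_lt_self (by omega) (by norm_num)⟩) →
    ∃ A : Matrix (Fin n) (Fin n) ℕ, (∀ a, ∑ b, A a b = R a) ∧ (∀ b, ∑ a, A a b = R b) ∧
      (∀ a b, A a b = A b.rev a) := by
  intro N
  induction N with
  | zero =>
    intro R hle hpal _
    apply case_zero R hpal
    intro i hi
    have h := Nat.le_zero.mp hle
    refine (Finset.sum_eq_zero_iff.mp h) i ?_
    simp [hi]
  | succ N ih =>
    intro R hle hpal hc
    by_cases hstep : ∃ i j : Fin n, (i : ℕ) < n / 2 ∧ (j : ℕ) < n / 2 ∧ 1 ≤ R i ∧ 1 ≤ R j ∧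
        (i = j → 2 ≤ R i)
    · obtain ⟨i, j, hi, hj, hRi, hRj, hij⟩ := hstep
      have hiv := i.isLt
      have hjv := j.isLt
      have f1 : i ≠ i.rev := by simp [Fin.ext_iff, Fin.val_rev]; omega
      have f2 : i ≠ j.rev := by simp [Fin.ext_iff, Fin.val_rev]; omega
      have f3 : j ≠ j.rev := by simp [Fin.ext_iff, Fin.val_rev]; omega
      have f4 : j ≠ i.rev := by simp [Fin.ext_iff, Fin.val_rev]; omega
      -- the bound on the weight function
      have hf : ∀ c, wt i j c ≤ R c := by
        intro c
        by_cases hc1 : c = i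
        · have w : wt i j i = 1 + (if i = j then 1 else 0) := by
            unfold wt
            rw [if_pos (rfl : i = i), if_neg f2, if_neg f1]
          rw [hc1, w]
          by_cases h : i = j
          · have h2 := hij h; rw [if_pos h]; omega
          · rw [if_neg h]; omega
        · by_cases hc2 : c = j
          · have w : wt i j j = 1 + (if j = i then 1 else 0) := by
              unfold wt
              rw [if_neg f3, if_neg f4, if_pos (rfl : j = j)]
              omega
            rw [hc2, w]
            by_cases h : j = i
            · have h2 := hij h.symm; rw [if_pos h, h]; omega
            · rw [if_neg h]; omega
          · by_cases hc3 : c = i.rev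
            · have w : wt i j i.rev = 1 + (if i = j then 1 else 0) := by
                unfold wt
                have e : (if i.rev = j.rev then (1:ℕ) else 0) = (if i = j then 1 else 0) :=
                  if_congr Fin.rev_inj rfl rfl
                rw [if_neg (show i.rev ≠ i from fun h => f1 h.symm),
                  if_neg (show i.rev ≠ j from fun h => f4 h.symm),
                  if_pos (rfl : i.rev = i.rev), e]
                omega
              rw [hc3, w, ← hpal i]
              by_cases h : i = j
              · have h2 := hij h; rw [if_pos h]; omega
              · rw [if_neg h]; omega
            · by_cases hc4 : c = j.rev
              · have w : wt i j j.rev = 1 + (if j = i then 1 else 0) := by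
                  unfold wt
                  have e : (if j.rev = i.rev then (1:ℕ) else 0) = (if j = i then 1 else 0) :=
                    if_congr Fin.rev_inj rfl rfl
                  rw [if_neg (show j.rev ≠ i from fun h => f2 h.symm),
                    if_neg (show j.rev ≠ j from fun h => f3 h.symm),
                    if_pos (rfl : j.rev = j.rev), e]
                  omega
                rw [hc4, w, ← hpal j]
                by_cases h : j = i
                · have h2 := hij h.symm; rw [if_pos h, h]; omega
                · rw [if_neg h]; omega
              · have w : wt i j c = 0 := by simp [wt, hc1, hc2, hc3, hc4]
                rw [w]; exact Nat.zero_le _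
      set R' : Fin n → ℕ := fun c => R c - wt i j c with hR'def
      have hRR' : ∀ c, R' c + wt i j c = R c := fun c => Nat.sub_add_cancel (hf c)
      have hpal' : ∀ c, R' c = R' c.rev := by
        intro c
        simp only [hR'def]
        rw [wt_rev, ← hpal c]
      have hσ : (∑ c ∈ Finset.univ.filter (fun c : Fin n => (c : ℕ) < n / 2), R' c) + 2 =
          ∑ c ∈ Finset.univ.filter (fun c : Fin n => (c : ℕ) < n / 2), R c := by
        have h1 : ∑ c ∈ Finset.univ.filter (fun c : Fin n => (c : ℕ) < n / 2), R c =
            (∑ c ∈ Finset.univ.filter (fun c : Fin n => (c : ℕ) < n / 2), R' c) +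
            ∑ c ∈ Finset.univ.filter (fun c : Fin n => (c : ℕ) < n / 2), wt i j c := by
          rw [← Finset.sum_add_distrib]
          exact (Finset.sum_congr rfl fun c _ => (hRR' c).symm)
        have h2 := sum_wt_T i j hi hj
        omega
      have hle' : (∑ c ∈ Finset.univ.filter (fun c : Fin n => (c : ℕ) < n / 2), R' c) ≤ N := by
        omega
      have hc' : (∑ c ∈ Finset.univ.filter (fun c : Fin n => (c : ℕ) < n / 2), R' c) % 2 = 0 ∨
          ∃ hn : n % 2 = 1, 2 ≤ R' ⟨n / 2, Nat.div_lt_self (by omega) (by norm_num)⟩ := by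
        rcases hc with hc | ⟨hn, hmid⟩
        · left; omega
        · right
          refine ⟨hn, ?_⟩
          have hwm : wt i j (⟨n / 2, Nat.div_lt_self (by omega) (by norm_num)⟩ : Fin n) = 0 := wt_mid hn i j hi hj
          have hdef : R' (⟨n / 2, Nat.div_lt_self (by omega) (by norm_num)⟩ : Fin n) =
              R ⟨n / 2, Nat.div_lt_self (by omega) (by norm_num)⟩ - wt i j ⟨n / 2, Nat.div_lt_self (by omega) (by norm_num)⟩ := rfl
          omega
      obtain ⟨A', hA1, hA2, hA3⟩ := ih R' hle' hpal' hc'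
      refine ⟨fun a b => A' a b + E i j a b, ?_, ?_, ?_⟩
      · intro a
        rw [Finset.sum_add_distrib, E_row, hA1]
        exact hRR' a
      · intro b
        rw [Finset.sum_add_distrib, E_col, hA2]
        exact hRR' b
      · intro a b
        show A' a b + E i j a b = A' b.rev a + E i j b.rev a
        rw [hA3 a b, E_symm]
    · by_cases h0 : ∀ i : Fin n, (i : ℕ) < n / 2 → R i = 0
      · exact case_zero R hpal h0
      · push_neg at h0
        obtain ⟨i0, hi0, hR0⟩ := h0
        have hR1 : R i0 = 1 := by
          rcases Nat.lt_or_ge (R i0) 2 with h | h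
          · omega
          · exact absurd ⟨i0, i0, hi0, hi0, by omega, by omega, fun _ => h⟩ hstep
        have hothers : ∀ j : Fin n, (j : ℕ) < n / 2 → j ≠ i0 → R j = 0 := by
          intro j hj hne
          by_contra hRj
          exact hstep ⟨i0, j, hi0, hj, by omega, by omega, fun h => absurd h.symm hne⟩
        have hσ1 : (∑ c ∈ Finset.univ.filter (fun c : Fin n => (c : ℕ) < n / 2), R c) = 1 := by
          rw [Finset.sum_eq_single_of_mem i0 (by simp [hi0])]
          · exact hR1
          · intro b hb hne
            simp only [Finset.mem_filter] at hb
            exact hothers b hb.2 hne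
        rcases hc with hc | ⟨hn, hmid⟩
        · omega
        · exact case_single hn R hpal i0 hi0 hR1 hothers hmid

end QTaux


open QTaux in
/-- **Transportation with quarter-turn symmetry (`ρ_{π/2}`).**
(I) `𝒯^{π/2}(R,S) ≠ ∅` iff (a) `R = S` and (b) `R` is palindromic.
(II) For nonnegative integer `R`, `S`: `𝒯^{π/2}_ℤ(R,S) ≠ ∅` iff (a) and (b)
hold together with at least one of (c) `r_1 + ⋯ + r_{⌊n/2⌋}` is even, or
(d) `n` is odd and `r_{⌈n/2⌉} ≥ 2`. -/
theorem quarter_turn_transportation (n : ℕ) (R S : Fin n → ℝ)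
    (hR : ∀ i, 0 ≤ R i) (hS : ∀ j, 0 ≤ S j)
    (hsum : ∑ i, R i = ∑ j, S j) :
    ((∃ A : Matrix (Fin n) (Fin n) ℝ,
        (∀ i j, 0 ≤ A i j) ∧
        (∀ i, ∑ j, A i j = R i) ∧
        (∀ j, ∑ i, A i j = S j) ∧
        (∀ i j, A i j = A j.rev i)) ↔
      (R = S ∧ ∀ i, R i = R i.rev))
    ∧ (∀ (R' S' : Fin n → ℕ),
        (∀ i, (R' i : ℝ) = R i) → (∀ j, (S' j : ℝ) = S j) →
        ((∃ A : Matrix (Fin n) (Fin n) ℕ,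
            (∀ i, ∑ j, A i j = R' i) ∧
            (∀ j, ∑ i, A i j = S' j) ∧
            (∀ i j, A i j = A j.rev i)) ↔
          (R' = S' ∧ (∀ i, R' i = R' i.rev) ∧
            ((∑ i ∈ Finset.univ.filter (fun i : Fin n => (i : ℕ) < n / 2), R' i) % 2 = 0 ∨
              ∃ hn : n % 2 = 1, 2 ≤ R' ⟨n / 2, by omega⟩)))) := by
  constructor
  · constructor
    · rintro ⟨A, hA0, hrow, hcol, hsym⟩
      have h2 : ∀ a b, A a b = A a.rev b.rev := fun a b => by
        rw [hsym a b, hsym b.rev a]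
      have hpal : ∀ i, R i = R i.rev := by
        intro i
        calc R i = ∑ j, A i j := (hrow i).symm
          _ = ∑ j : Fin n, A i.rev j.rev := Finset.sum_congr rfl fun j _ => h2 i j
          _ = ∑ j, A i.rev j := Equiv.sum_comp Fin.revPerm (fun j => A i.rev j)
          _ = R i.rev := hrow i.rev
      refine ⟨funext fun j => ?_, hpal⟩
      have hS' : S j = R j.rev := by
        rw [← hcol j, ← hrow j.rev]
        exact Finset.sum_congr rfl fun i _ => hsym i j
      rw [hS', ← hpal j]
    · rintro ⟨hRS, hpal⟩
      by_cases hT : ∑ k, R k = 0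
      · have hz : ∀ i, R i = 0 := by
          intro i
          have := (Finset.sum_eq_zero_iff_of_nonneg (fun i _ => hR i)).mp hT
          exact this i (Finset.mem_univ i)
        refine ⟨0, fun i j => le_refl 0, fun i => by simp [hz i], fun j => ?_, fun i j => rfl⟩
        have hSj : S j = 0 := by rw [← hRS]; exact hz j
        simp [hSj]
      · refine ⟨fun i j => R i * R j / (∑ k, R k), ?_, ?_, ?_, ?_⟩
        · intro i j
          have hTpos : 0 ≤ ∑ k, R k := Finset.sum_nonneg fun k _ => hR k
          exact div_nonneg (mul_nonneg (hR i) (hR j)) hTpos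
        · intro i
          rw [← Finset.sum_div, ← Finset.mul_sum, mul_div_assoc, div_self hT, mul_one]
        · intro j
          rw [← Finset.sum_div, ← Finset.sum_mul, mul_comm, mul_div_assoc, div_self hT,
            mul_one, ← hRS]
        · intro i j
          show R i * R j / (∑ k, R k) = R j.rev * R i / (∑ k, R k)
          rw [← hpal j]
          ring
  · intro R' S' _ _
    constructor
    · rintro ⟨A, hrow, hcol, hsym⟩
      have h2 : ∀ a b, A a b = A a.rev b.rev := fun a b => by
        rw [hsym a b, hsym b.rev a]
      have hpal : ∀ i, R' i = R' i.rev := by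
        intro i
        calc R' i = ∑ j, A i j := (hrow i).symm
          _ = ∑ j : Fin n, A i.rev j.rev := Finset.sum_congr rfl fun j _ => h2 i j
          _ = ∑ j, A i.rev j := Equiv.sum_comp Fin.revPerm (fun j => A i.rev j)
          _ = R' i.rev := hrow i.rev
      have hRS : R' = S' := by
        funext j
        have hS' : S' j = R' j.rev := by
          rw [← hcol j, ← hrow j.rev]
          exact Finset.sum_congr rfl fun i _ => hsym i j
        rw [hS', ← hpal j]
      refine ⟨hRS, hpal, ?_⟩
      have hkey : ∀ i j : Fin n, A i j.rev = A j i := fun i j => by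
        rw [hsym i j.rev, Fin.rev_rev]
      have hswap : (∑ i ∈ Finset.univ.filter (fun c : Fin n => (c : ℕ) < n / 2),
          ∑ j ∈ Finset.univ.filter (fun c : Fin n => (c : ℕ) < n / 2), (A i j + A j i)) =
          2 * ∑ i ∈ Finset.univ.filter (fun c : Fin n => (c : ℕ) < n / 2),
            ∑ j ∈ Finset.univ.filter (fun c : Fin n => (c : ℕ) < n / 2), A i j := by
        have e1 : (∑ i ∈ Finset.univ.filter (fun c : Fin n => (c : ℕ) < n / 2),
            ∑ j ∈ Finset.univ.filter (fun c : Fin n => (c : ℕ) < n / 2), (A i j + A j i)) =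
            ∑ i ∈ Finset.univ.filter (fun c : Fin n => (c : ℕ) < n / 2),
              ((∑ j ∈ Finset.univ.filter (fun c : Fin n => (c : ℕ) < n / 2), A i j) +
               ∑ j ∈ Finset.univ.filter (fun c : Fin n => (c : ℕ) < n / 2), A j i) :=
          Finset.sum_congr rfl fun i _ => Finset.sum_add_distrib
        have e2 : (∑ i ∈ Finset.univ.filter (fun c : Fin n => (c : ℕ) < n / 2),
            ∑ j ∈ Finset.univ.filter (fun c : Fin n => (c : ℕ) < n / 2), A j i) =
            ∑ i ∈ Finset.univ.filter (fun c : Fin n => (c : ℕ) < n / 2),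
              ∑ j ∈ Finset.univ.filter (fun c : Fin n => (c : ℕ) < n / 2), A i j :=
          Finset.sum_comm
        rw [e1, Finset.sum_add_distrib, e2, two_mul]
      by_cases hn : n % 2 = 1
      · -- odd case
        set mid : Fin n := ⟨n / 2, by omega⟩ with hmiddef
        have hσ : (∑ i ∈ Finset.univ.filter (fun c : Fin n => (c : ℕ) < n / 2), R' i) =
            (∑ i ∈ Finset.univ.filter (fun c : Fin n => (c : ℕ) < n / 2),
              ∑ j ∈ Finset.univ.filter (fun c : Fin n => (c : ℕ) < n / 2), (A i j + A j i))
            + ∑ i ∈ Finset.univ.filter (fun c : Fin n => (c : ℕ) < n / 2), A i mid := by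
          rw [← Finset.sum_add_distrib]
          apply Finset.sum_congr rfl
          intro i _
          rw [← hrow i, sum_split_odd hn (fun j => A i j)]
          congr 1
          apply Finset.sum_congr rfl
          intro j _
          rw [hkey i j]
        have hmid : R' mid = 2 * (∑ i ∈ Finset.univ.filter (fun c : Fin n => (c : ℕ) < n / 2),
            A i mid) + A mid mid := by
          have hrev : ∀ i : Fin n, A i.rev mid = A i mid := by
            intro i
            rw [h2 i mid, mid_rev hn]
          calc R' mid = S' mid := by rw [hRS]
            _ = ∑ i, A i mid := (hcol mid).symm
            _ = (∑ i ∈ Finset.univ.filter (fun c : Fin n => (c : ℕ) < n / 2),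
                  (A i mid + A i.rev mid)) + A mid mid := sum_split_odd hn _
            _ = (∑ i ∈ Finset.univ.filter (fun c : Fin n => (c : ℕ) < n / 2),
                  (A i mid + A i mid)) + A mid mid := by
                congr 1
                exact Finset.sum_congr rfl fun i _ => by rw [hrev i]
            _ = 2 * (∑ i ∈ Finset.univ.filter (fun c : Fin n => (c : ℕ) < n / 2),
                  A i mid) + A mid mid := by
                rw [two_mul, Finset.sum_add_distrib]
        rw [hswap] at hσ
        by_cases hpar : (∑ i ∈ Finset.univ.filter (fun c : Fin n => (c : ℕ) < n / 2), R' i)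
            % 2 = 0
        · exact Or.inl hpar
        · refine Or.inr ⟨hn, ?_⟩
          show 2 ≤ R' mid
          omega
      · -- even case
        left
        have hne : n % 2 = 0 := by omega
        have hσ : (∑ i ∈ Finset.univ.filter (fun c : Fin n => (c : ℕ) < n / 2), R' i) =
            ∑ i ∈ Finset.univ.filter (fun c : Fin n => (c : ℕ) < n / 2),
              ∑ j ∈ Finset.univ.filter (fun c : Fin n => (c : ℕ) < n / 2), (A i j + A j i) := by
          apply Finset.sum_congr rfl
          intro i _
          rw [← hrow i, sum_split_even hne (fun j => A i j)]
          apply Finset.sum_congr rfl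
          intro j _
          rw [hkey i j]
        rw [hswap] at hσ
        omega
    · rintro ⟨hRS, hpal, hc⟩
      obtain ⟨A, h1, h2, h3⟩ := exists_qt
        (∑ i ∈ Finset.univ.filter (fun i : Fin n => (i : ℕ) < n / 2), R' i) R' le_rfl hpal hc
      exact ⟨A, h1, fun b => by rw [h2 b, hRS], h3⟩
end
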